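/- Let K be a field of characteristic p with p ≡ 3 (mod 5), write p = 5u + 3. Then there exist polynomials F, G ∈ K[X,Y] and a nonzero H ∈ K[X,Y], with H a K-linear combination of the u+1 monomials XY·X^{5i}Y^{5(u-i)} for 0 ≤ i ≤ u, such that F·X^{5(2u+1)+1} + G·Y^{5(2u+1)+1} + H·(X^5+Y^5)^{2u+1} = 0 and deg H = 5u + 2. -/

import Mathlib

open MvPolynomial Finset

private lemma aux_mono_mem {K : Type*} [Field K] (N a b : ℕ) (k : K) (h : N ≤ a ∨ N ≤ b) :
    monomial (Finsupp.single 0 a + Finsupp.single 1 b) k ∈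
      Ideal.span {(X 0 : MvPolynomial (Fin 2) K) ^ N, X 1 ^ N} := by
  rcases h with h | h
  · obtain ⟨m, rfl⟩ : ∃ m, a = m + N := ⟨a - N, by omega⟩
    have : monomial (Finsupp.single (0 : Fin 2) (m + N) + Finsupp.single 1 b) k
        = monomial (Finsupp.single 0 m + Finsupp.single 1 b) k * X 0 ^ N := by
      rw [X_pow_eq_monomial, monomial_mul, mul_one, Finsupp.single_add]
      congr 1; abel
    rw [this]
    exact Ideal.mul_mem_left _ _ (Ideal.subset_span (by simp))
  · obtain ⟨m, rfl⟩ : ∃ m, b = m + N := ⟨b - N, by omega⟩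
    have : monomial (Finsupp.single (0 : Fin 2) a + Finsupp.single 1 (m + N)) k
        = monomial (Finsupp.single 0 a + Finsupp.single 1 m) k * X 1 ^ N := by
      rw [X_pow_eq_monomial, monomial_mul, mul_one, Finsupp.single_add]
      congr 1; abel
    rw [this]
    exact Ideal.mul_mem_left _ _ (Ideal.subset_span (by simp))

private lemma aux_ker {K : Type*} [Field K] {u : ℕ} (M : Matrix (Fin u) (Fin (u+1)) K) :
    ∃ c : Fin (u+1) → K, c ≠ 0 ∧ M.mulVec c = 0 := by
  have hne : LinearMap.ker M.mulVecLin ≠ ⊥ := by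
    intro h
    have hinj := LinearMap.ker_eq_bot.mp h
    have := LinearMap.finrank_le_finrank_of_injective hinj
    simp [Module.finrank_pi] at this
  obtain ⟨c, hc, hc0⟩ := Submodule.ne_bot_iff _ |>.mp hne
  exact ⟨c, hc0, by simpa using hc⟩

private lemma aux_pow_expand (K : Type*) [Field K] (q : ℕ) :
    ((X 0 : MvPolynomial (Fin 2) K) ^ 5 + X 1 ^ 5) ^ q
      = ∑ j ∈ range (q + 1),
          monomial (Finsupp.single 0 (5 * j) + Finsupp.single 1 (5 * (q - j)))
            ((q.choose j : K)) := by
  rw [add_pow]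
  refine Finset.sum_congr rfl fun j hj => ?_
  rw [← pow_mul, ← pow_mul, X_pow_eq_monomial, X_pow_eq_monomial, monomial_mul, one_mul]
  have : ((q.choose j : ℕ) : MvPolynomial (Fin 2) K) = C ((q.choose j : ℕ) : K) := by
    simp
  rw [this, mul_comm, C_mul_monomial, mul_one]

theorem stmt_4 (K : Type*) [Field K] (p u : ℕ) (hp : p.Prime) [CharP K p]
    (hpu : p = 5 * u + 3) :
    ∃ F G H : MvPolynomial (Fin 2) K,
      H ≠ 0 ∧
      H ∈ Submodule.span K
        {m : MvPolynomial (Fin 2) K |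
          ∃ i ≤ u, m = X 0 * X 1 * X 0 ^ (5 * i) * X 1 ^ (5 * (u - i))} ∧
      F * X 0 ^ (5 * (2 * u + 1) + 1) + G * X 1 ^ (5 * (2 * u + 1) + 1)
          + H * (X 0 ^ 5 + X 1 ^ 5) ^ (2 * u + 1) = 0 ∧
      H.totalDegree = 5 * u + 2 := by
  classical
  set q : ℕ := 2 * u + 1 with hq
  set N : ℕ := 5 * (2 * u + 1) + 1 with hN
  -- the kernel vector
  obtain ⟨c, hc0, hck⟩ := aux_ker (K := K)
    (Matrix.of fun (a : Fin u) (i : Fin (u+1)) => (q.choose ((u + 1 + a) - i) : K))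
  set c' : ℕ → K := fun n => if h : n < u + 1 then c ⟨n, h⟩ else 0 with hc'
  -- the kernel relation in ℕ-indexed form
  have hker : ∀ a : ℕ, u + 1 ≤ a → a ≤ 2 * u →
      ∑ i ∈ range (u + 1), c' i * (q.choose (a - i) : K) = 0 := by
    intro a ha1 ha2
    have h0 := congrFun hck ⟨a - (u + 1), by omega⟩
    simp only [Matrix.mulVec, dotProduct, Matrix.of_apply, Pi.zero_apply] at h0
    rw [← Fin.sum_univ_eq_sum_range (fun n => c' n * (q.choose (a - n) : K)) (u + 1)]
    rw [← h0]
    refine Finset.sum_congr rfl fun i _ => ?_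
    have hi : (i : ℕ) < u + 1 := i.isLt
    have h1 : c' (i : ℕ) = c i := by simp [hc', hi]; intro h; omega
    have h2 : a - (i : ℕ) = u + 1 + (a - (u + 1)) - (i : ℕ) := by omega
    rw [h1, mul_comm, h2]
  -- the exponents of H
  set dd : ℕ → (Fin 2 →₀ ℕ) :=
    fun i => Finsupp.single 0 (5 * i + 1) + Finsupp.single 1 (5 * (u - i) + 1) with hdd
  have hddinj : ∀ i' i : ℕ, dd i' = dd i → i' = i := by
    intro i' i h
    have := DFunLike.congr_fun h (0 : Fin 2)
    simp [hdd, Finsupp.single_apply] at this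
    omega
  set H : MvPolynomial (Fin 2) K := ∑ i ∈ range (u + 1), monomial (dd i) (c' i) with hH
  -- coefficients of H
  have hcoeff : ∀ i : ℕ, i < u + 1 → coeff (dd i) H = c' i := by
    intro i hi
    rw [hH, coeff_sum]
    rw [Finset.sum_eq_single i]
    · simp [coeff_monomial]
    · intro i' hi' hne
      rw [coeff_monomial, if_neg (fun h => hne (hddinj i' i h))]
    · intro h; exact absurd (mem_range.mpr hi) h
  obtain ⟨i₀, hi₀⟩ := Function.ne_iff.mp hc0
  have hci₀ : c' (i₀ : ℕ) ≠ 0 := by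
    simpa [hc', i₀.isLt, Fin.eta] using And.intro (Nat.lt_succ_iff.mp i₀.isLt) hi₀
  have hHne : H ≠ 0 := fun h => hci₀ (by rw [← hcoeff i₀ i₀.isLt, h, coeff_zero])
  -- total degree
  have hdsum : ∀ i : ℕ, i ≤ u → ((dd i).sum fun _ e => e) = 5 * u + 2 := by
    intro i hi
    rw [hdd]
    rw [Finsupp.sum_add_index (by simp) (by simp)]
    rw [Finsupp.sum_single_index rfl, Finsupp.sum_single_index rfl]
    omega
  have hdeg : H.totalDegree = 5 * u + 2 := by
    apply le_antisymm
    · refine le_trans (totalDegree_finset_sum _ _) (Finset.sup_le fun i hi => ?_)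
      refine le_trans (totalDegree_monomial_le _ _) ?_
      exact le_of_eq (hdsum i (Nat.lt_succ_iff.mp (mem_range.mp hi)))
    · have hmem : dd i₀ ∈ H.support := by
        rw [mem_support_iff, hcoeff i₀ i₀.isLt]; exact hci₀
      have := le_totalDegree hmem
      rwa [hdsum i₀ (Nat.lt_succ_iff.mp i₀.isLt)] at this
  -- H lies in the span
  have hspan : H ∈ Submodule.span K
      {m : MvPolynomial (Fin 2) K |
        ∃ i ≤ u, m = X 0 * X 1 * X 0 ^ (5 * i) * X 1 ^ (5 * (u - i))} := by
    rw [hH]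
    refine Submodule.sum_mem _ fun i hi => ?_
    have hmono : (X 0 : MvPolynomial (Fin 2) K) * X 1 * X 0 ^ (5 * i) * X 1 ^ (5 * (u - i))
        = monomial (dd i) 1 := by
      rw [X_pow_eq_monomial, X_pow_eq_monomial, X, X, monomial_mul, monomial_mul,
        monomial_mul, one_mul, one_mul, one_mul]
      have he : Finsupp.single (0 : Fin 2) 1 + Finsupp.single 1 1 + Finsupp.single 0 (5 * i)
          + Finsupp.single 1 (5 * (u - i)) = dd i := by
        ext x
        fin_cases x <;>
          simp [hdd, Finsupp.single_apply] <;> omega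
      rw [he]
    have hsm : monomial (dd i) (c' i) = c' i • monomial (dd i) (1 : K) := by
      rw [smul_monomial, smul_eq_mul, mul_one]
    rw [hsm]
    exact Submodule.smul_mem _ _ (Submodule.subset_span
      ⟨i, Nat.lt_succ_iff.mp (mem_range.mp hi), hmono.symm⟩)
  -- the key ideal membership
  have hideal : H * (X 0 ^ 5 + X 1 ^ 5) ^ q ∈
      Ideal.span {(X 0 : MvPolynomial (Fin 2) K) ^ N, X 1 ^ N} := by
    rw [hH, aux_pow_expand K q, Finset.sum_mul_sum]
    have hterm : ∀ i ∈ range (u + 1), ∀ j ∈ range (q + 1),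
        monomial (dd i) (c' i) *
          monomial (Finsupp.single 0 (5 * j) + Finsupp.single 1 (5 * (q - j)))
            ((q.choose j : K))
        = monomial (Finsupp.single 0 (5 * (i + j) + 1)
            + Finsupp.single 1 (5 * (u + q - (i + j)) + 1)) (c' i * (q.choose j : K)) := by
      intro i hi j hj
      have hi' := mem_range.mp hi
      have hj' := mem_range.mp hj
      rw [monomial_mul]
      have he : dd i + (Finsupp.single 0 (5 * j) + Finsupp.single 1 (5 * (q - j)))
          = Finsupp.single (0 : Fin 2) (5 * (i + j) + 1)
            + Finsupp.single 1 (5 * (u + q - (i + j)) + 1) := by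
        ext x
        fin_cases x <;> simp [hdd, Finsupp.single_apply] <;> omega
      rw [he]
    rw [Finset.sum_congr rfl (fun i hi => Finset.sum_congr rfl (hterm i hi))]
    rw [← Finset.sum_product']
    set T := range (u + 1) ×ˢ range (q + 1) with hT
    set f : ℕ × ℕ → MvPolynomial (Fin 2) K := fun z =>
      monomial (Finsupp.single 0 (5 * (z.1 + z.2) + 1)
        + Finsupp.single 1 (5 * (u + q - (z.1 + z.2)) + 1))
        (c' z.1 * (q.choose z.2 : K)) with hf
    have hsplit := Finset.sum_filter_add_sum_filter_not T
      (fun z => u + 1 ≤ z.1 + z.2 ∧ z.1 + z.2 ≤ 2 * u) f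
    rw [show (∑ z ∈ T, f z) = _ from hsplit.symm]
    apply Ideal.add_mem
    · -- middle part vanishes
      have hmid : ∑ z ∈ T.filter (fun z => u + 1 ≤ z.1 + z.2 ∧ z.1 + z.2 ≤ 2 * u), f z
          = ∑ w ∈ (Finset.Icc (u + 1) (2 * u)) ×ˢ range (u + 1),
              f (w.2, w.1 - w.2) := by
        refine Finset.sum_nbij' (fun z => (z.1 + z.2, z.1)) (fun w => (w.2, w.1 - w.2))
          ?_ ?_ ?_ ?_ ?_ <;>
        · rintro ⟨z1, z2⟩ hz
          simp only [hT, Finset.mem_filter, Finset.mem_product, Finset.mem_Icc,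
            Finset.mem_range, Prod.mk.injEq, true_and, and_true,
            Nat.add_sub_cancel_left] at hz ⊢
          try first
          | rfl
          | omega
          | (constructor <;> omega)
      rw [hmid, Finset.sum_product]
      have hz : ∀ a ∈ Finset.Icc (u + 1) (2 * u),
          ∑ i ∈ range (u + 1), f (i, a - i) = 0 := by
        intro a ha
        rw [Finset.mem_Icc] at ha
        have hcongr : ∀ i ∈ range (u + 1), f (i, a - i)
            = monomial (Finsupp.single 0 (5 * a + 1)
                + Finsupp.single 1 (5 * (u + q - a) + 1))
                (c' i * (q.choose (a - i) : K)) := by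
          intro i hi
          have hi' := mem_range.mp hi
          have hia : i + (a - i) = a := by omega
          simp only [hf, hia]
        rw [Finset.sum_congr rfl hcongr, ← map_sum, hker a ha.1 ha.2, map_zero]
      rw [Finset.sum_congr rfl hz, Finset.sum_const_zero]
      exact Ideal.zero_mem _
    · -- extreme parts lie in the ideal
      refine Ideal.sum_mem _ fun z hz => ?_
      simp only [hT, Finset.mem_filter, Finset.mem_product, Finset.mem_range, not_and_or,
        not_le] at hz
      obtain ⟨⟨hz1, hz2⟩, hz3⟩ := hz
      refine aux_mono_mem N _ _ _ ?_
      rcases hz3 with h | h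
      · right; omega
      · left; omega
  -- extract F and G
  obtain ⟨x, y, hxy⟩ := Ideal.mem_span_pair.mp hideal
  refine ⟨-x, -y, H, hHne, hspan, ?_, hdeg⟩
  linear_combination -hxy
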